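/- Let X be a smooth projective surface with χ(O_X) = 1 and let (A₁, …, A_n) be a toric system on X. Then for any cyclic segment [k,…,l] ⊊ [1,…,n], the divisor A_{k…l} = Σ_{i∈[k,…,l]} A_i is numerically left-orthogonal and satisfies A_{k…l}² + 2 = Σ_{i∈[k,…,l]} (A_i² + 2). -/

import Mathlib

/-- Let `(A₁,…,A_n)` be a toric system on a surface with
`χ(O_X) = 1` (encoded as an `n`-periodic sequence `A : ℤ → Pic` with the
cyclic adjacency/orthogonality/sum conditions). For any proper cyclic
segment, starting at `k` and of length `m` with `1 ≤ m < n`, the sum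
`S = A_k + … + A_{k+m-1}` is numerically left-orthogonal (`χ(-S) = 0`)
and `S² + 2 = Σᵢ (Aᵢ² + 2)` over the segment. -/
theorem toric_system_segment_nlo {Pic : Type*} [AddCommGroup Pic]
    (inter : Pic →ₗ[ℤ] Pic →ₗ[ℤ] ℤ)
    (hsymm : ∀ a b : Pic, inter a b = inter b a)
    (K : Pic) (chi : Pic → ℤ)
    (hchiO : chi 0 = 1)
    (hRR : ∀ D : Pic, 2 * chi D = 2 * chi 0 + inter D (D - K))
    (n : ℕ) (hn : 3 ≤ n)
    (A : ℤ → Pic)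
    (hAper : ∀ i : ℤ, A (i + n) = A i)
    (hAadj : ∀ i : ℤ, inter (A i) (A (i + 1)) = 1)
    (hAorth : ∀ i j : ℤ, ¬((n : ℤ) ∣ j - i) → ¬((n : ℤ) ∣ j - i - 1) →
      ¬((n : ℤ) ∣ j - i + 1) → inter (A i) (A j) = 0)
    (hAsum : ∑ i ∈ Finset.range n, A (i : ℤ) = -K)
    (k : ℤ) (m : ℕ) (hm1 : 1 ≤ m) (hm2 : m < n) :
    chi (-(∑ j ∈ Finset.range m, A (k + (j : ℤ)))) = 0 ∧
    inter (∑ j ∈ Finset.range m, A (k + (j : ℤ)))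
          (∑ j ∈ Finset.range m, A (k + (j : ℤ))) + 2 =
      ∑ j ∈ Finset.range m, (inter (A (k + (j : ℤ))) (A (k + (j : ℤ))) + 2) := by

  -- Orthogonality for gaps in [2, n-2]
  have horth : ∀ i j : ℤ, 2 ≤ j - i → j - i ≤ (n : ℤ) - 2 → inter (A i) (A j) = 0 := by
    intro i j h1 h2
    apply hAorth
    · intro h; have := Int.le_of_dvd (by omega) h; omega
    · intro h; have := Int.le_of_dvd (by omega) h; omega
    · intro h; have := Int.le_of_dvd (by omega) h; omega
  have hadj' : ∀ i : ℤ, inter (A (i + 1)) (A i) = 1 := fun i => by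
    rw [hsymm]; exact hAadj i
  -- key: sum of intersections of segment with the next element is 1
  have hkey : ∀ m' : ℕ, 1 ≤ m' → (m' : ℤ) ≤ (n : ℤ) - 2 →
      ∑ j ∈ Finset.range m', inter (A (k + (j : ℤ))) (A (k + (m' : ℤ))) = 1 := by
    intro m' h1 h2
    obtain ⟨p, rfl⟩ : ∃ p, m' = p + 1 := ⟨m' - 1, by omega⟩
    rw [Finset.sum_range_succ]
    have hz : ∑ j ∈ Finset.range p, inter (A (k + (j : ℤ))) (A (k + ((p + 1 : ℕ) : ℤ))) = 0 := by
      apply Finset.sum_eq_zero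
      intro j hj
      rw [Finset.mem_range] at hj
      apply horth
      · push_cast; omega
      · push_cast at h2 ⊢; omega
    rw [hz, zero_add]
    have h := hAadj (k + (p : ℤ))
    rw [show k + ((p + 1 : ℕ) : ℤ) = k + (p : ℤ) + 1 by push_cast; ring]
    exact h
  -- part 2 by induction
  have hP2 : ∀ m', 1 ≤ m' → m' < n →
      inter (∑ j ∈ Finset.range m', A (k + (j : ℤ)))
            (∑ j ∈ Finset.range m', A (k + (j : ℤ))) + 2 =
        ∑ j ∈ Finset.range m', (inter (A (k + (j : ℤ))) (A (k + (j : ℤ))) + 2) := by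
    intro m'
    induction m' with
    | zero => omega
    | succ p ih =>
      intro _ hlt
      rcases Nat.eq_zero_or_pos p with hp | hp
      · subst hp; simp
      · have hS := ih hp (by omega)
        rw [Finset.sum_range_succ, Finset.sum_range_succ]
        set s := ∑ j ∈ Finset.range p, A (k + (j : ℤ)) with hsdef
        set a := A (k + (p : ℤ)) with hadef
        have hexp : inter (s + a) (s + a) =
            inter s s + inter s a + inter a s + inter a a := by
          simp [map_add, LinearMap.add_apply]; ring
        have hsa : inter s a = 1 := by
          rw [hsdef, hadef, map_sum, LinearMap.sum_apply]
          exact hkey p hp (by push_cast; omega)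
        have has : inter a s = 1 := by rw [hsymm]; exact hsa
        rw [hexp, hsa, has]
        omega
  -- one-step shift of a full-period sum
  have hshift1 : ∀ c : ℤ, ∑ i ∈ Finset.range n, A (c + 1 + (i : ℤ)) =
      ∑ i ∈ Finset.range n, A (c + (i : ℤ)) := by
    intro c
    obtain ⟨p, hpn⟩ : ∃ p, n = p + 1 := ⟨n - 1, by omega⟩
    rw [hpn, Finset.sum_range_succ, Finset.sum_range_succ']
    have h1 : A (c + 1 + (p : ℤ)) = A (c + ((0 : ℕ) : ℤ)) := by
      have h := hAper c
      rw [hpn] at h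
      rw [show c + 1 + (p : ℤ) = c + ((p + 1 : ℕ) : ℤ) by push_cast; ring, h]
      norm_num
    rw [h1]
    congr 1
    apply Finset.sum_congr rfl
    intro i _
    congr 1
    push_cast; ring
  -- full-period sums are shift invariant
  have hshift : ∀ c : ℤ, ∑ i ∈ Finset.range n, A (c + (i : ℤ)) =
      ∑ i ∈ Finset.range n, A ((i : ℤ)) := by
    intro c
    induction c using Int.induction_on with
    | zero => simp
    | succ c ih =>
      calc ∑ i ∈ Finset.range n, A ((c : ℤ) + 1 + (i : ℤ))
          = ∑ i ∈ Finset.range n, A ((c : ℤ) + (i : ℤ)) := hshift1 c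
        _ = _ := ih
    | pred c ih =>
      have h := hshift1 (-(c : ℤ) - 1)
      have e : ∀ i : ℕ, A (-(c : ℤ) - 1 + 1 + (i : ℤ)) = A (-(c : ℤ) + (i : ℤ)) := by
        intro i; congr 1; ring
      rw [← h]
      simp only [e]
      exact ih
  -- the intersection of A c with a full period sum centered before c
  have key3 : ∀ c : ℤ, inter (A c) (∑ i ∈ Finset.range n, A (c - 1 + (i : ℤ))) =
      inter (A c) (A c) + 2 := by
    intro c
    rw [map_sum]
    rw [Finset.range_eq_Ico, ← Finset.sum_Ico_consecutive _ (by omega : 0 ≤ 3) (by omega : 3 ≤ n)]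
    have h2 : ∑ i ∈ Finset.Ico 3 n, inter (A c) (A (c - 1 + (i : ℤ))) = 0 := by
      apply Finset.sum_eq_zero
      intro i hi
      rw [Finset.mem_Ico] at hi
      apply horth
      · push_cast; omega
      · push_cast; omega
    rw [h2, add_zero]
    rw [show Finset.Ico 0 3 = Finset.range 3 by rw [Finset.range_eq_Ico]]
    rw [Finset.sum_range_succ, Finset.sum_range_succ, Finset.sum_range_succ,
      Finset.sum_range_zero]
    have e0 : c - 1 + ((0 : ℕ) : ℤ) = c - 1 := by norm_num
    have e1 : c - 1 + ((1 : ℕ) : ℤ) = c := by norm_num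
    have e2 : c - 1 + ((2 : ℕ) : ℤ) = c + 1 := by push_cast; ring
    rw [e0, e1, e2]
    have v0 : inter (A c) (A (c - 1)) = 1 := by
      have h := hadj' (c - 1)
      rw [show c - 1 + 1 = c by ring] at h
      exact h
    rw [v0, hAadj c]
    ring
  -- inter of S with -K
  have hpart2 := hP2 m hm1 hm2
  set S := ∑ j ∈ Finset.range m, A (k + (j : ℤ)) with hSdef
  have hSnK : inter S (-K) = inter S S + 2 := by
    have h1 : inter S (-K) = ∑ j ∈ Finset.range m, inter (A (k + (j : ℤ))) (-K) := by
      rw [hSdef, map_sum, LinearMap.sum_apply]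
    have h2 : ∀ j ∈ Finset.range m,
        inter (A (k + (j : ℤ))) (-K) =
          inter (A (k + (j : ℤ))) (A (k + (j : ℤ))) + 2 := by
      intro j hj
      rw [← hAsum, ← hshift (k + (j : ℤ) - 1)]
      have e : ∀ i : ℕ, k + (j : ℤ) - 1 + (i : ℤ) = k + (j : ℤ) - 1 + (i : ℤ) := fun _ => rfl
      exact key3 (k + (j : ℤ))
    rw [h1, Finset.sum_congr rfl h2, ← hpart2]
  have hSK : inter S K = -(inter S S) - 2 := by
    have := hSnK
    rw [map_neg] at this
    omega
  constructor
  · have h := hRR (-S)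
    rw [hchiO] at h
    have hexp : inter (-S) (-S - K) = inter S S + inter S K := by
      simp only [map_neg, map_sub, LinearMap.neg_apply, LinearMap.sub_apply]
      ring
    rw [hexp, hSK] at h
    omega
  · exact hpart2
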